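/- Let f : ℝⁿ → ℝⁿ be a homeomorphism fixing 0 that contracts the standard basis: f(2⁻ⁿB) ⊆ r_n·B with 2⁻ⁿ⁻¹ < r_n < 2⁻ⁿ for each n ≥ 0. Let λ : [0,∞) → [0,∞) be an increasing homeomorphism with λ(2⁻ⁿ) = r_n and λ(r_n) = 2⁻ⁿ⁻¹, and define b(x) = λ(‖x‖)·x/‖x‖ (and b(0)=0). Then b f b⁻¹ f maps 2⁻ⁿB into 2⁻ⁿ⁻¹B for all n, so b f b⁻¹ f is a local contraction. -/

import Mathlib

open Metric

/-- If `f` contracts the standard basis of balls (`f(2⁻ⁿB) ⊆ rₙB` with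
`2⁻ⁿ⁻¹ < rₙ < 2⁻ⁿ`), and `b` is the radial homeomorphism induced by an increasing `λ` with
`λ(2⁻ⁿ) = rₙ` and `λ(rₙ) = 2⁻ⁿ⁻¹`, then `b f b⁻¹ f` maps `2⁻ⁿB` into `2⁻ⁿ⁻¹B` for all `n`,
hence is a local contraction. -/
theorem stmt16 (n : ℕ)
    (f b : EuclideanSpace ℝ (Fin n) ≃ₜ EuclideanSpace ℝ (Fin n))
    (r : ℕ → ℝ) (lam : ℝ → ℝ)
    (hf0 : f 0 = 0)
    (hr : ∀ k : ℕ, (2 : ℝ)⁻¹ ^ (k + 1) < r k ∧ r k < (2 : ℝ)⁻¹ ^ k)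
    (hf : ∀ k : ℕ, ⇑f '' closedBall (0 : EuclideanSpace ℝ (Fin n)) ((2 : ℝ)⁻¹ ^ k) ⊆
      closedBall 0 (r k))
    (hlam0 : lam 0 = 0) (hmono : StrictMonoOn lam (Set.Ici (0 : ℝ)))
    (hlam1 : ∀ k : ℕ, lam ((2 : ℝ)⁻¹ ^ k) = r k)
    (hlam2 : ∀ k : ℕ, lam (r k) = (2 : ℝ)⁻¹ ^ (k + 1))
    (hb : ∀ x : EuclideanSpace ℝ (Fin n), x ≠ 0 → b x = (lam ‖x‖ / ‖x‖) • x)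
    (hb0 : b 0 = 0) :
    ∀ k : ℕ, (⇑b ∘ ⇑f ∘ ⇑b.symm ∘ ⇑f) ''
        closedBall (0 : EuclideanSpace ℝ (Fin n)) ((2 : ℝ)⁻¹ ^ k) ⊆
      closedBall 0 ((2 : ℝ)⁻¹ ^ (k + 1)) := by
  -- lam is nonnegative on [0,∞)
  have hnn : ∀ t : ℝ, 0 ≤ t → 0 ≤ lam t := by
    intro t ht
    rcases eq_or_lt_of_le ht with h | h
    · rw [← h, hlam0]
    · rw [← hlam0]
      exact (hmono (le_refl (0 : ℝ)) ht h).le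
  -- norm of b
  have hnorm : ∀ x : EuclideanSpace ℝ (Fin n), ‖b x‖ = lam ‖x‖ := by
    intro x
    rcases eq_or_ne x 0 with rfl | hx
    · simp [hb0, hlam0]
    · rw [hb x hx, norm_smul, Real.norm_eq_abs,
        abs_of_nonneg (div_nonneg (hnn _ (norm_nonneg x)) (norm_nonneg x)),
        div_mul_cancel₀]
      exact norm_ne_zero_iff.mpr hx
  intro k y hy
  rcases hy with ⟨x, hx, rfl⟩
  have hxk : ‖x‖ ≤ (2 : ℝ)⁻¹ ^ k := by simpa using hx
  have h2k : (0 : ℝ) ≤ (2 : ℝ)⁻¹ ^ k := by positivity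
  have hrk : (0 : ℝ) ≤ r k := le_trans (by positivity) (hr k).1.le
  -- f x ∈ r k ball
  have h1 : ‖f x‖ ≤ r k := by
    have := hf k ⟨x, by simpa using hxk, rfl⟩
    simpa using this
  -- b.symm (f x) ∈ 2⁻ᵏ ball
  set z := b.symm (f x) with hz
  have hbz : b z = f x := b.apply_symm_apply (f x)
  have h2 : ‖z‖ ≤ (2 : ℝ)⁻¹ ^ k := by
    by_contra h
    push_neg at h
    have : lam ((2 : ℝ)⁻¹ ^ k) < lam ‖z‖ := hmono h2k (norm_nonneg z) h
    rw [hlam1, ← hnorm, hbz] at this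
    exact absurd h1 (not_le.mpr this)
  -- f z ∈ r k ball
  have h3 : ‖f z‖ ≤ r k := by
    have := hf k ⟨z, by simpa using h2, rfl⟩
    simpa using this
  -- b (f z)
  have h4 : ‖b (f z)‖ ≤ (2 : ℝ)⁻¹ ^ (k + 1) := by
    rw [hnorm, ← hlam2 k]
    rcases eq_or_lt_of_le h3 with h | h
    · rw [h]
    · exact (hmono (norm_nonneg _) hrk h).le
  simpa using h4
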